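/- Let L(t), Lhat(t), B(t), Bhat(t) be continuously differentiable families of N×N real matrices satisfying the weakly coupled Lax equations dL/dt = [B,L] and dLhat/dt = [Bhat, L] + [B, Lhat]. Then for every k ≥ 1, the quantity trace(L(t)^{k-1} Lhat(t)) times k, i.e., d/dt trace of the derivative of L^k in the Lhat-direction, is conserved: trace(Σ_{i+j=k-1} L^i Lhat L^j) is constant in t. -/

import Mathlib

open Matrix

/-- Entrywise product rule for matrix-valued functions. -/
lemma hd_mul {N : ℕ} {f g : ℝ → Matrix (Fin N) (Fin N) ℝ}
    {f' g' : Matrix (Fin N) (Fin N) ℝ} {t : ℝ}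
    (hf : ∀ i j, HasDerivAt (fun u => f u i j) (f' i j) t)
    (hg : ∀ i j, HasDerivAt (fun u => g u i j) (g' i j) t) :
    ∀ i j, HasDerivAt (fun u => (f u * g u) i j)
      ((f' * g t + f t * g') i j) t := by
  intro i j
  have h : HasDerivAt (fun u => ∑ k, f u i k * g u k j)
      (∑ k, (f' i k * g t k j + f t i k * g' k j)) t :=
    HasDerivAt.fun_sum fun k _ => (hf i k).mul (hg k j)
  simpa [Matrix.mul_apply, Matrix.add_apply, Finset.sum_add_distrib] using h

/-- Derivative of powers under the Lax equation. -/
lemma hd_pow {N : ℕ} {L B : ℝ → Matrix (Fin N) (Fin N) ℝ} {t : ℝ}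
    (hL : ∀ i j, HasDerivAt (fun u => L u i j) ((B t * L t - L t * B t) i j) t)
    (m : ℕ) :
    ∀ i j, HasDerivAt (fun u => (L u ^ m) i j)
      ((B t * L t ^ m - L t ^ m * B t) i j) t := by
  induction m with
  | zero =>
      intro i j
      simpa using (hasDerivAt_const t ((1 : Matrix (Fin N) (Fin N) ℝ) i j))
  | succ m ih =>
      intro i j
      have h := hd_mul (f := fun u => L u ^ m) (g := L)
        (f' := B t * L t ^ m - L t ^ m * B t) (g' := B t * L t - L t * B t) ih hL
      have h2 := h i j
      have e1 : (B t * L t ^ m - L t ^ m * B t) * L t + L t ^ m * (B t * L t - L t * B t)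
          = B t * L t ^ (m + 1) - L t ^ (m + 1) * B t := by
        have hc : L t ^ m * L t = L t * L t ^ m := (Commute.pow_self (L t) m).eq
        simp only [sub_mul, mul_sub, pow_succ]
        rw [mul_assoc, mul_assoc, mul_assoc, hc]
        abel
      rw [e1] at h2
      simpa [pow_succ] using h2

/-- For the weakly coupled Lax equations `dL/dt = [B,L]`,
`dLhat/dt = [Bhat,L] + [B,Lhat]`, the quantity
`trace (Σ_{i+j=k-1} L^i * Lhat * L^j)` is conserved for every `k ≥ 1`. -/
theorem stmt3 (N : ℕ) (a b : ℝ) (L Lhat B Bhat : ℝ → Matrix (Fin N) (Fin N) ℝ)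
    (hLax : ∀ t ∈ Set.Ioo a b, ∀ i j,
      HasDerivAt (fun u => L u i j) ((B t * L t - L t * B t) i j) t)
    (hLaxHat : ∀ t ∈ Set.Ioo a b, ∀ i j,
      HasDerivAt (fun u => Lhat u i j)
        ((Bhat t * L t - L t * Bhat t + (B t * Lhat t - Lhat t * B t)) i j) t)
    (hBcont : ∀ i j, ContinuousOn (fun t => B t i j) (Set.Ioo a b))
    (hBhcont : ∀ i j, ContinuousOn (fun t => Bhat t i j) (Set.Ioo a b))
    (hLcont : ∀ i j, ContinuousOn (fun t => L t i j) (Set.Ioo a b))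
    (hLhcont : ∀ i j, ContinuousOn (fun t => Lhat t i j) (Set.Ioo a b)) :
    ∀ k : ℕ, 1 ≤ k → ∀ t₁ ∈ Set.Ioo a b, ∀ t₂ ∈ Set.Ioo a b,
      (∑ i ∈ Finset.range k, L t₁ ^ i * Lhat t₁ * L t₁ ^ (k - 1 - i)).trace
        = (∑ i ∈ Finset.range k, L t₂ ^ i * Lhat t₂ * L t₂ ^ (k - 1 - i)).trace := by
  intro k hk t₁ ht₁ t₂ ht₂
  -- the conserved quantity, rewritten
  set F : ℝ → ℝ := fun u => (L u ^ (k - 1) * Lhat u).trace with hF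
  -- the sum trace equals k • F
  have key : ∀ t : ℝ, (∑ i ∈ Finset.range k, L t ^ i * Lhat t * L t ^ (k - 1 - i)).trace
      = (k : ℝ) * F t := by
    intro t
    rw [Matrix.trace_sum]
    have : ∀ i ∈ Finset.range k, (L t ^ i * Lhat t * L t ^ (k - 1 - i)).trace = F t := by
      intro i hi
      have hik : i ≤ k - 1 := Nat.le_sub_one_of_lt (Finset.mem_range.mp hi)
      rw [Matrix.trace_mul_comm]
      rw [← mul_assoc, ← pow_add]
      rw [Nat.sub_add_cancel hik]
    rw [Finset.sum_congr rfl this]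
    simp
  rw [key t₁, key t₂]
  -- F has derivative 0 on Ioo a b
  have hderiv : ∀ t ∈ Set.Ioo a b, HasDerivAt F 0 t := by
    intro t ht
    have hLd := hLax t ht
    have hLhd := hLaxHat t ht
    have hpow := hd_pow (L := L) (B := B) (t := t) hLd (k - 1)
    have hprod := hd_mul (f := fun u => L u ^ (k - 1)) (g := Lhat)
      (f' := B t * L t ^ (k - 1) - L t ^ (k - 1) * B t)
      (g' := Bhat t * L t - L t * Bhat t + (B t * Lhat t - Lhat t * B t)) hpow hLhd
    have htr : HasDerivAt F
        (((B t * L t ^ (k - 1) - L t ^ (k - 1) * B t) * Lhat t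
          + L t ^ (k - 1) * (Bhat t * L t - L t * Bhat t + (B t * Lhat t - Lhat t * B t))).trace) t := by
      have h : HasDerivAt (fun u => ∑ i, (L u ^ (k - 1) * Lhat u) i i)
          (∑ i, ((B t * L t ^ (k - 1) - L t ^ (k - 1) * B t) * Lhat t
          + L t ^ (k - 1) * (Bhat t * L t - L t * Bhat t + (B t * Lhat t - Lhat t * B t))) i i) t :=
        HasDerivAt.fun_sum fun i _ => hprod i i
      simpa [hF, Matrix.trace, Matrix.diag] using h
    have hzero : ((B t * L t ^ (k - 1) - L t ^ (k - 1) * B t) * Lhat t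
          + L t ^ (k - 1) * (Bhat t * L t - L t * Bhat t + (B t * Lhat t - Lhat t * B t))).trace = 0 := by
      have hc : L t * L t ^ (k-1) = L t ^ (k-1) * L t := (Commute.pow_self (L t) (k-1)).eq.symm
      simp only [Matrix.sub_mul, Matrix.mul_sub, Matrix.mul_add, Matrix.trace_add,
        Matrix.trace_sub, ← mul_assoc]
      have e1 : (B t * L t ^ (k-1) * Lhat t).trace = (L t ^ (k-1) * Lhat t * B t).trace :=
        (Matrix.trace_mul_cycle (L t ^ (k-1)) (Lhat t) (B t)).symm
      have e2 : (L t ^ (k-1) * Bhat t * L t).trace = (L t ^ (k-1) * L t * Bhat t).trace := by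
        rw [Matrix.trace_mul_cycle (L t ^ (k-1)) (Bhat t) (L t), hc]
      rw [e1, e2]
      ring
    rw [← hzero]
    exact htr
  -- conclude constancy via MVT on [min, max]
  have hconst : F t₁ = F t₂ := by
    rcases le_total t₁ t₂ with h12 | h12
    · have hsub : Set.Icc t₁ t₂ ⊆ Set.Ioo a b :=
        Set.Icc_subset_Ioo ht₁.1 ht₂.2
      have hcont : ContinuousOn F (Set.Icc t₁ t₂) := fun x hx =>
        ((hderiv x (hsub hx)).continuousAt).continuousWithinAt
      have := constant_of_has_deriv_right_zero hcont
        (fun x hx => ((hderiv x (hsub (Set.Ico_subset_Icc_self hx))).hasDerivWithinAt))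
      exact (this t₂ (Set.right_mem_Icc.mpr h12)).symm ▸ rfl
    · have hsub : Set.Icc t₂ t₁ ⊆ Set.Ioo a b :=
        Set.Icc_subset_Ioo ht₂.1 ht₁.2
      have hcont : ContinuousOn F (Set.Icc t₂ t₁) := fun x hx =>
        ((hderiv x (hsub hx)).continuousAt).continuousWithinAt
      have := constant_of_has_deriv_right_zero hcont
        (fun x hx => ((hderiv x (hsub (Set.Ico_subset_Icc_self hx))).hasDerivWithinAt))
      exact (this t₁ (Set.right_mem_Icc.mpr h12))
  rw [hconst]
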